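/- Define α_t = σ²(1-t)/(t² + (1-t)²σ²), β_t = t²/(t² + (1-t)²σ²), and γ_t = (1-t)/(t² + (1-t)²). If 0 < σ < 1, then for all t ∈ (0,1), γ_t > α_t; moreover, as t → 0⁺, γ_t - α_t = t²(σ⁻² - 1) + O(t³). -/
import Mathlib


open Filter Asymptotics

/-- `α_t = σ²(1-t)/(t² + (1-t)² σ²)`. -/
noncomputable def alphaCoef (σ t : ℝ) : ℝ := σ ^ 2 * (1 - t) / (t ^ 2 + (1 - t) ^ 2 * σ ^ 2)

/-- `γ_t = (1-t)/(t² + (1-t)²)`. -/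
noncomputable def gammaCoef (t : ℝ) : ℝ := (1 - t) / (t ^ 2 + (1 - t) ^ 2)

/-- If `0 < σ < 1`, then `γ_t > α_t` for all `t ∈ (0,1)`, and as `t → 0⁺`,
`γ_t - α_t = t²(σ⁻² - 1) + O(t³)`. -/
theorem gamma_gt_alpha (σ : ℝ) (hσ : 0 < σ) (hσ1 : σ < 1) :
    (∀ t ∈ Set.Ioo (0 : ℝ) 1, alphaCoef σ t < gammaCoef t)
    ∧ (fun t => gammaCoef t - alphaCoef σ t - t ^ 2 * ((σ ^ 2)⁻¹ - 1))
        =O[nhdsWithin 0 (Set.Ioi 0)] fun t => t ^ 3 := by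
  have hσ2 : (0:ℝ) < σ ^ 2 := by positivity
  have hA : ∀ t : ℝ, 0 < t ^ 2 + (1 - t) ^ 2 := by
    intro t; nlinarith [sq_nonneg (2*t - 1)]
  have hB : ∀ t : ℝ, 0 < t ^ 2 + (1 - t) ^ 2 * σ ^ 2 := by
    intro t; nlinarith [sq_nonneg t, sq_nonneg ((1 - t) * σ), sq_nonneg (t - (1 - t) * σ ^ 2),
      sq_nonneg (t + (1 - t) * σ ^ 2)]
  constructor
  · rintro t ⟨ht0, ht1⟩
    rw [alphaCoef, gammaCoef, div_lt_div_iff₀ (hB t) (hA t)]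
    have hs2 : σ ^ 2 < 1 := by nlinarith
    nlinarith [mul_pos (mul_pos ht0 ht0) (sub_pos.2 ht1), hs2]
  · set h : ℝ → ℝ := fun t =>
      (1 - σ ^ 2) * (3*σ^2 - (1+7*σ^2)*t + (2+6*σ^2)*t^2 - (2+2*σ^2)*t^3) /
        ((t ^ 2 + (1 - t) ^ 2) * (t ^ 2 + (1 - t) ^ 2 * σ ^ 2) * σ ^ 2) with hh
    have heq : ∀ t : ℝ, gammaCoef t - alphaCoef σ t - t ^ 2 * ((σ ^ 2)⁻¹ - 1)
        = h t * t ^ 3 := by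
      intro t
      have hA' := (hA t).ne'
      have hB' := (hB t).ne'
      rw [gammaCoef, alphaCoef, hh]
      field_simp
      ring
    have hcont : ContinuousAt h 0 := by
      apply ContinuousAt.div (by fun_prop) (by fun_prop)
      have := hA 0
      have := hB 0
      positivity
    have hO1 : h =O[nhdsWithin 0 (Set.Ioi 0)] (fun _ : ℝ => (1:ℝ)) :=
      (hcont.tendsto.mono_left nhdsWithin_le_nhds).isBigO_one ℝ
    have : (fun t => h t * t ^ 3) =O[nhdsWithin 0 (Set.Ioi 0)] fun t => t ^ 3 := by
      simpa using hO1.mul (isBigO_refl (fun t : ℝ => t ^ 3) _)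
    exact this.congr' (by filter_upwards with t using (heq t).symm) (by rfl)
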